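/- Every translational Killing tensor satisfies the Tonolo–Schouten–Nijenhuis (TSN) orthogonal-integrability conditions: let K be the symmetric tensor field on ℝ³ with components K¹¹ = a₁ + 2b₁₃y + c₃y², K¹² = α₃ − b₁₃x + b₂₃y − c₃xy, K²² = a₂ − 2b₂₃x + c₃x², K³³ = a₃, K¹³ = K²³ = 0, for arbitrary real parameters a₁, a₂, a₃, α₃, b₁₃, b₂₃, c₃. Define N^i_{jk} := Σ_ℓ [ K_{iℓ}·½(∂_k K_{ℓj} − ∂_j K_{ℓk}) + ½(K_{ℓj} ∂_ℓ K_{ik} − K_{ℓk} ∂_ℓ K_{ij}) ]. Then, identically on ℝ³, (i) the totally antisymmetric part over (i,j,k) of N_{ijk} vanishes, (ii) the totally antisymmetric part over (i,j,k) of Σ_ℓ N_{ℓjk} K_{iℓ} vanishes, and (iii) the totally antisymmetric part over (i,j,k) of Σ_{ℓ,m} N_{ℓjk} K_{im} K_{mℓ} vanishes. -/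

import Mathlib

open Matrix

/-- 3×3 real matrices. -/
abbrev M3 := Matrix (Fin 3) (Fin 3) ℝ

/-- Partial derivative `∂_k f` at `x`. -/
noncomputable def pder (k : Fin 3) (f : (Fin 3 → ℝ) → ℝ) (x : Fin 3 → ℝ) : ℝ :=
  fderiv ℝ f x (Pi.single k 1)

/-- The translational Killing tensor with parameters `a₁ a₂ a₃ α₃ b₁₃ b₂₃ c₃`. -/
def Kt (a₁ a₂ a₃ α₃ b₁₃ b₂₃ c₃ : ℝ) (p : Fin 3 → ℝ) : M3 :=
  !![a₁ + 2 * b₁₃ * p 1 + c₃ * (p 1) ^ 2,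
       α₃ - b₁₃ * p 0 + b₂₃ * p 1 - c₃ * p 0 * p 1, 0;
     α₃ - b₁₃ * p 0 + b₂₃ * p 1 - c₃ * p 0 * p 1,
       a₂ - 2 * b₂₃ * p 0 + c₃ * (p 0) ^ 2, 0;
     0, 0, a₃]

/-- The Nijenhuis tensor `N^i_{jk}` of a symmetric tensor field `K` (indices
raised/lowered with the identity metric). -/
noncomputable def Nij (K : (Fin 3 → ℝ) → M3) (x : Fin 3 → ℝ) (i j k : Fin 3) : ℝ :=
  ∑ l : Fin 3,
    (K x i l * ((1 : ℝ) / 2)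
        * (pder k (fun y => K y l j) x - pder j (fun y => K y l k) x)
      + ((1 : ℝ) / 2)
        * (K x l j * pder l (fun y => K y i k) x
            - K x l k * pder l (fun y => K y i j) x))

/-- Totally antisymmetric part of a 3-index array over `(i,j,k)`. -/
noncomputable def alt3 (T : Fin 3 → Fin 3 → Fin 3 → ℝ) (i j k : Fin 3) : ℝ :=
  ((1 : ℝ) / 6) * (T i j k - T i k j + T j k i - T j i k + T k i j - T k j i)

/-! ### Auxiliary machinery -/

lemma pder_poly (a b c d e g : ℝ) (x : Fin 3 → ℝ) (k : Fin 3) :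
    pder k (fun y : Fin 3 → ℝ =>
      a + b * y 0 + c * y 1 + d * (y 0 * y 0) + e * (y 1 * y 1) + g * (y 0 * y 1)) x
    = (b + 2 * d * x 0 + g * x 1) * ((Pi.single k (1:ℝ) : Fin 3 → ℝ) 0)
      + (c + 2 * e * x 1 + g * x 0) * ((Pi.single k (1:ℝ) : Fin 3 → ℝ) 1) := by
  have h0 : HasFDerivAt (fun y : Fin 3 → ℝ => y 0)
      (ContinuousLinearMap.proj 0 : (Fin 3 → ℝ) →L[ℝ] ℝ) x :=
    hasFDerivAt_apply 0 x
  have h1 : HasFDerivAt (fun y : Fin 3 → ℝ => y 1)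
      (ContinuousLinearMap.proj 1 : (Fin 3 → ℝ) →L[ℝ] ℝ) x :=
    hasFDerivAt_apply 1 x
  have H : HasFDerivAt (fun y : Fin 3 → ℝ =>
      a + b * y 0 + c * y 1 + d * (y 0 * y 0) + e * (y 1 * y 1) + g * (y 0 * y 1)) _ x :=
    (((((hasFDerivAt_const a x).add ((h0.const_mul b))).add
      (h1.const_mul c)).add ((h0.mul h0).const_mul d)).add
      ((h1.mul h1).const_mul e)).add ((h0.mul h1).const_mul g)
  rw [pder, H.fderiv]
  simp [ContinuousLinearMap.proj_apply]
  ring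

/-- explicit derivative of Kt entries: `dKt k l j = ∂_k K_{lj}`. -/
def dKt (b₁₃ b₂₃ c₃ : ℝ) (x : Fin 3 → ℝ) (k l j : Fin 3) : ℝ :=
  if k = 0 then
    !![0, -b₁₃ - c₃ * x 1, 0; -b₁₃ - c₃ * x 1, -(2*b₂₃) + 2*c₃ * x 0, 0; 0,0,0] l j
  else if k = 1 then
    !![2*b₁₃ + 2*c₃ * x 1, b₂₃ - c₃ * x 0, 0; b₂₃ - c₃ * x 0, 0, 0; 0,0,0] l j
  else 0

lemma Kt_entry_eq (a₁ a₂ a₃ α₃ b₁₃ b₂₃ c₃ : ℝ) (l j : Fin 3)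
    (a b c d e g : ℝ)
    (h : ∀ y : Fin 3 → ℝ, Kt a₁ a₂ a₃ α₃ b₁₃ b₂₃ c₃ y l j
      = a + b * y 0 + c * y 1 + d * (y 0 * y 0) + e * (y 1 * y 1) + g * (y 0 * y 1))
    (x : Fin 3 → ℝ) (k : Fin 3) :
    pder k (fun y => Kt a₁ a₂ a₃ α₃ b₁₃ b₂₃ c₃ y l j) x
    = (b + 2 * d * x 0 + g * x 1) * ((Pi.single k (1:ℝ) : Fin 3 → ℝ) 0)
      + (c + 2 * e * x 1 + g * x 0) * ((Pi.single k (1:ℝ) : Fin 3 → ℝ) 1) := by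
  rw [show (fun y => Kt a₁ a₂ a₃ α₃ b₁₃ b₂₃ c₃ y l j)
      = (fun y : Fin 3 → ℝ => a + b * y 0 + c * y 1 + d * (y 0 * y 0)
          + e * (y 1 * y 1) + g * (y 0 * y 1)) from funext h, pder_poly]

set_option linter.unreachableTactic false in
set_option linter.unusedTactic false in
lemma pder_Kt (a₁ a₂ a₃ α₃ b₁₃ b₂₃ c₃ : ℝ) (x : Fin 3 → ℝ) (l j k : Fin 3) :
    pder k (fun y => Kt a₁ a₂ a₃ α₃ b₁₃ b₂₃ c₃ y l j) x = dKt b₁₃ b₂₃ c₃ x k l j := by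
  fin_cases l <;> fin_cases j
  · show pder k (fun y => Kt a₁ a₂ a₃ α₃ b₁₃ b₂₃ c₃ y 0 0) x = dKt b₁₃ b₂₃ c₃ x k 0 0
    rw [Kt_entry_eq a₁ a₂ a₃ α₃ b₁₃ b₂₃ c₃ 0 0 a₁ 0 (2*b₁₃) 0 c₃ 0
      (fun y => by simp only [Kt, Matrix.cons_val', Matrix.cons_val_zero, Matrix.empty_val',
        Matrix.cons_val_fin_one, Matrix.of_apply]; ring) x k]
    fin_cases k <;> simp [dKt, Pi.single_apply, Matrix.vecHead, Matrix.vecTail] <;> ring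
  · show pder k (fun y => Kt a₁ a₂ a₃ α₃ b₁₃ b₂₃ c₃ y 0 1) x = dKt b₁₃ b₂₃ c₃ x k 0 1
    rw [Kt_entry_eq a₁ a₂ a₃ α₃ b₁₃ b₂₃ c₃ 0 1 α₃ (-b₁₃) b₂₃ 0 0 (-c₃)
      (fun y => by simp only [Kt, Matrix.cons_val', Matrix.cons_val_zero, Matrix.empty_val',
        Matrix.cons_val_fin_one, Matrix.cons_val_one, Matrix.head_cons, Matrix.head_fin_const,
        Matrix.of_apply]; ring) x k]
    fin_cases k <;> simp [dKt, Pi.single_apply, Matrix.vecHead, Matrix.vecTail] <;> ring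
  · show pder k (fun y => Kt a₁ a₂ a₃ α₃ b₁₃ b₂₃ c₃ y 0 2) x = dKt b₁₃ b₂₃ c₃ x k 0 2
    rw [Kt_entry_eq a₁ a₂ a₃ α₃ b₁₃ b₂₃ c₃ 0 2 0 0 0 0 0 0
      (fun y => by simp [Kt]) x k]
    fin_cases k <;> simp [dKt, Pi.single_apply, Matrix.vecHead, Matrix.vecTail]
  · show pder k (fun y => Kt a₁ a₂ a₃ α₃ b₁₃ b₂₃ c₃ y 1 0) x = dKt b₁₃ b₂₃ c₃ x k 1 0
    rw [Kt_entry_eq a₁ a₂ a₃ α₃ b₁₃ b₂₃ c₃ 1 0 α₃ (-b₁₃) b₂₃ 0 0 (-c₃)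
      (fun y => by simp only [Kt, Matrix.cons_val', Matrix.cons_val_zero, Matrix.empty_val',
        Matrix.cons_val_fin_one, Matrix.cons_val_one, Matrix.head_cons, Matrix.head_fin_const,
        Matrix.of_apply]; ring) x k]
    fin_cases k <;> simp [dKt, Pi.single_apply, Matrix.vecHead, Matrix.vecTail] <;> ring
  · show pder k (fun y => Kt a₁ a₂ a₃ α₃ b₁₃ b₂₃ c₃ y 1 1) x = dKt b₁₃ b₂₃ c₃ x k 1 1
    rw [Kt_entry_eq a₁ a₂ a₃ α₃ b₁₃ b₂₃ c₃ 1 1 a₂ (-(2*b₂₃)) 0 c₃ 0 0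
      (fun y => by simp only [Kt, Matrix.cons_val', Matrix.cons_val_zero, Matrix.empty_val',
        Matrix.cons_val_fin_one, Matrix.cons_val_one, Matrix.head_cons, Matrix.head_fin_const,
        Matrix.of_apply]; ring) x k]
    fin_cases k <;> simp [dKt, Pi.single_apply, Matrix.vecHead, Matrix.vecTail] <;> ring
  · show pder k (fun y => Kt a₁ a₂ a₃ α₃ b₁₃ b₂₃ c₃ y 1 2) x = dKt b₁₃ b₂₃ c₃ x k 1 2
    rw [Kt_entry_eq a₁ a₂ a₃ α₃ b₁₃ b₂₃ c₃ 1 2 0 0 0 0 0 0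
      (fun y => by simp [Kt]) x k]
    fin_cases k <;> simp [dKt, Pi.single_apply, Matrix.vecHead, Matrix.vecTail]
  · show pder k (fun y => Kt a₁ a₂ a₃ α₃ b₁₃ b₂₃ c₃ y 2 0) x = dKt b₁₃ b₂₃ c₃ x k 2 0
    rw [Kt_entry_eq a₁ a₂ a₃ α₃ b₁₃ b₂₃ c₃ 2 0 0 0 0 0 0 0
      (fun y => by simp [Kt]) x k]
    fin_cases k <;> simp [dKt, Pi.single_apply, Matrix.vecHead, Matrix.vecTail]
  · show pder k (fun y => Kt a₁ a₂ a₃ α₃ b₁₃ b₂₃ c₃ y 2 1) x = dKt b₁₃ b₂₃ c₃ x k 2 1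
    rw [Kt_entry_eq a₁ a₂ a₃ α₃ b₁₃ b₂₃ c₃ 2 1 0 0 0 0 0 0
      (fun y => by simp [Kt]) x k]
    fin_cases k <;> simp [dKt, Pi.single_apply, Matrix.vecHead, Matrix.vecTail]
  · show pder k (fun y => Kt a₁ a₂ a₃ α₃ b₁₃ b₂₃ c₃ y 2 2) x = dKt b₁₃ b₂₃ c₃ x k 2 2
    rw [Kt_entry_eq a₁ a₂ a₃ α₃ b₁₃ b₂₃ c₃ 2 2 a₃ 0 0 0 0 0
      (fun y => by simp [Kt]) x k]
    fin_cases k <;> simp [dKt, Pi.single_apply, Matrix.vecHead, Matrix.vecTail]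

/-- Closed form: `Nij (Kt …) x i j k = fN i * eps2 j k`. -/
def NP (a₁ a₂ α₃ b₁₃ b₂₃ c₃ : ℝ) (x : Fin 3 → ℝ) : ℝ :=
  c₃*c₃*(x 1)^3 + c₃*c₃*(x 0)^2*x 1 - 2*b₂₃*c₃*x 0*x 1 + 2*b₂₃*b₂₃*x 1
  + 3*b₁₃*c₃*(x 1)^2 + b₁₃*c₃*(x 0)^2 + 2*b₁₃*b₁₃*x 1 - 2*α₃*c₃*x 0
  + 2*α₃*b₂₃ - a₂*c₃*x 1 - a₂*b₁₃ + a₁*c₃*x 1 + a₁*b₁₃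

def NQ (a₁ a₂ α₃ b₁₃ b₂₃ c₃ : ℝ) (x : Fin 3 → ℝ) : ℝ :=
  -(c₃*c₃*x 0*(x 1)^2) - c₃*c₃*(x 0)^3 + b₂₃*c₃*(x 1)^2 + 3*b₂₃*c₃*(x 0)^2
  - 2*b₂₃*b₂₃*x 0 - 2*b₁₃*c₃*x 0*x 1 - 2*b₁₃*b₁₃*x 0 + 2*α₃*c₃*x 1
  + 2*α₃*b₁₃ - a₂*c₃*x 0 + a₂*b₂₃ + a₁*c₃*x 0 - a₁*b₂₃

def eps2 (j k : Fin 3) : ℝ :=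
  if j = 0 ∧ k = 1 then 1 else if j = 1 ∧ k = 0 then -1 else 0

def fN (a₁ a₂ α₃ b₁₃ b₂₃ c₃ : ℝ) (x : Fin 3 → ℝ) (i : Fin 3) : ℝ :=
  if i = 0 then NP a₁ a₂ α₃ b₁₃ b₂₃ c₃ x else if i = 1 then NQ a₁ a₂ α₃ b₁₃ b₂₃ c₃ x else 0

set_option maxHeartbeats 1000000 in
set_option linter.unreachableTactic false in
set_option linter.unusedTactic false in
lemma Nij_Kt (a₁ a₂ a₃ α₃ b₁₃ b₂₃ c₃ : ℝ) (x : Fin 3 → ℝ) (i j k : Fin 3) :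
    Nij (Kt a₁ a₂ a₃ α₃ b₁₃ b₂₃ c₃) x i j k
      = fN a₁ a₂ α₃ b₁₃ b₂₃ c₃ x i * eps2 j k := by
  fin_cases i <;> fin_cases j <;> fin_cases k <;>
    simp only [Nij, pder_Kt, Fin.sum_univ_three, Fin.zero_eta, Fin.mk_one, Fin.reduceFinMk,
      Fin.isValue] <;>
    simp [Kt, dKt, fN, eps2, NP, NQ, Matrix.vecHead, Matrix.vecTail] <;> ring

set_option maxHeartbeats 4000000 in
/-- STATEMENT 9: every translational Killing tensor satisfies the
Tonolo–Schouten–Nijenhuis conditions. -/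
theorem translational_Killing_tensor_satisfies_TSN
    (a₁ a₂ a₃ α₃ b₁₃ b₂₃ c₃ : ℝ) (x : Fin 3 → ℝ) (i j k : Fin 3) :
    alt3 (fun i' j' k' => Nij (Kt a₁ a₂ a₃ α₃ b₁₃ b₂₃ c₃) x i' j' k') i j k = 0 ∧
    alt3 (fun i' j' k' => ∑ l : Fin 3,
        Nij (Kt a₁ a₂ a₃ α₃ b₁₃ b₂₃ c₃) x l j' k'
          * Kt a₁ a₂ a₃ α₃ b₁₃ b₂₃ c₃ x i' l) i j k = 0 ∧
    alt3 (fun i' j' k' => ∑ l : Fin 3, ∑ m : Fin 3,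
        Nij (Kt a₁ a₂ a₃ α₃ b₁₃ b₂₃ c₃) x l j' k'
          * Kt a₁ a₂ a₃ α₃ b₁₃ b₂₃ c₃ x i' m
          * Kt a₁ a₂ a₃ α₃ b₁₃ b₂₃ c₃ x m l) i j k = 0 := by
  refine ⟨?_, ?_, ?_⟩ <;>
    fin_cases i <;> fin_cases j <;> fin_cases k <;>
      simp only [alt3, Nij_Kt, Fin.sum_univ_three, Fin.zero_eta, Fin.mk_one, Fin.reduceFinMk,
        Fin.isValue] <;>
      simp [Kt, fN, eps2, Matrix.vecHead, Matrix.vecTail] <;> ring
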